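/- arXiv:1707.01437 — 2 statements merged into one kernel-verified Lean document; each statement's English description precedes it below -/
import Mathlib

section
/- Suppose g : S¹ → SL(2,ℂ) is given by a finite Laurent matrix [[a₂*, b₂*],[c₂, d₂]] where a₂, b₂, c₂, d₂ are polynomials in z of degree ≤ n with n > 0, c₂(0) = 0, d₂(0) ≠ 0, and the determinant identity a₂* d₂ − b₂* c₂ = 1 holds as Laurent polynomials on ℂ∖{0}. Then the coefficient of z^n in a₂ is zero, i.e., deg a₂ < n. -/
/-- For a polynomial `f(z) = Σ fₖ zᵏ` with complex coefficients, `f*` is the Laurent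
polynomial `f*(z) = Σ (fₖ)* z^{-k}`, where `(·)*` is complex conjugation. -/
noncomputable def polyStar (f : Polynomial ℂ) : LaurentPolynomial ℂ :=
  ∑ k ∈ Finset.range (f.natDegree + 1),
    LaurentPolynomial.C (starRingEnd ℂ (f.coeff k)) * LaurentPolynomial.T (-(k : ℤ))

lemma polyStar_eq (f : Polynomial ℂ) (n : ℕ) (h : f.natDegree ≤ n) :
    polyStar f = ∑ k ∈ Finset.range (n + 1),
      AddMonoidAlgebra.single (-(k : ℤ)) (starRingEnd ℂ (f.coeff k)) := by
  unfold polyStar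
  simp_rw [LaurentPolynomial.single_eq_C_mul_T]
  apply Finset.sum_subset (Finset.range_subset_range.mpr (by omega))
  intro k _ hk
  have : f.coeff k = 0 := Polynomial.coeff_eq_zero_of_natDegree_lt (by
    simp only [Finset.mem_range, not_lt] at hk ⊢; omega)
  simp [this]

lemma toLaurent_eq (f : Polynomial ℂ) (n : ℕ) (h : f.natDegree ≤ n) :
    Polynomial.toLaurent f = ∑ j ∈ Finset.range (n + 1),
      AddMonoidAlgebra.single (j : ℤ) (f.coeff j) := by
  conv_lhs => rw [Polynomial.as_sum_range' f (n + 1) (by omega)]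
  rw [map_sum]
  simp_rw [Polynomial.toLaurent_C_mul_T, LaurentPolynomial.single_eq_C_mul_T]

lemma prod_apply_coeff (u v : Polynomial ℂ) (n : ℕ) (hn : 0 < n) (hu : u.natDegree ≤ n)
    (hv : v.natDegree ≤ n) :
    (polyStar u * Polynomial.toLaurent v).coeff (-(n : ℤ)) =
      starRingEnd ℂ (u.coeff n) * v.coeff 0 := by
  rw [polyStar_eq u n hu, toLaurent_eq v n hv, Finset.sum_mul_sum]
  simp_rw [AddMonoidAlgebra.single_mul_single]
  rw [AddMonoidAlgebra.coeff_sum, Finset.sum_apply']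
  rw [Finset.sum_congr rfl fun i _ => by rw [AddMonoidAlgebra.coeff_sum, Finset.sum_apply' (-(n : ℤ))]]
  simp_rw [AddMonoidAlgebra.coeff_single, Finsupp.single_apply]
  rw [Finset.sum_eq_single n]
  · rw [Finset.sum_eq_single 0]
    · simp
    · intro j _ hj0
      rw [if_neg (by omega)]
    · simp
  · intro k hk hkn
    apply Finset.sum_eq_zero
    intro j hj
    simp only [Finset.mem_range] at hj hk
    rw [if_neg (by omega)]
  · simp

/-- If `g = [[a₂*, b₂*],[c₂, d₂]]` with `a₂, b₂, c₂, d₂` polynomials of degree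
`≤ n`, `n > 0`, `c₂(0) = 0`, `d₂(0) ≠ 0` and `a₂* d₂ − b₂* c₂ = 1` as Laurent polynomials,
then the coefficient of `zⁿ` in `a₂` vanishes, i.e. `deg a₂ < n`. -/
theorem stmt3 (n : ℕ) (hn : 0 < n) (a₂ b₂ c₂ d₂ : Polynomial ℂ)
    (ha : a₂.natDegree ≤ n) (hb : b₂.natDegree ≤ n)
    (hc : c₂.natDegree ≤ n) (hd : d₂.natDegree ≤ n)
    (hc0 : c₂.coeff 0 = 0) (hd0 : d₂.coeff 0 ≠ 0)
    (hdet : polyStar a₂ * Polynomial.toLaurent d₂ - polyStar b₂ * Polynomial.toLaurent c₂ = 1) :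
    a₂.coeff n = 0 := by
  have happ := congrArg (fun p : LaurentPolynomial ℂ => p.coeff (-(n : ℤ))) hdet
  have hsub : (polyStar a₂ * Polynomial.toLaurent d₂ -
      polyStar b₂ * Polynomial.toLaurent c₂).coeff (-(n : ℤ)) =
      (polyStar a₂ * Polynomial.toLaurent d₂).coeff (-(n : ℤ)) -
      (polyStar b₂ * Polynomial.toLaurent c₂).coeff (-(n : ℤ)) := rfl
  rw [hsub, prod_apply_coeff a₂ d₂ n hn ha hd, prod_apply_coeff b₂ c₂ n hn hb hc, hc0, mul_zero,
    sub_zero] at happ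
  have h1 : (1 : LaurentPolynomial ℂ).coeff (-(n : ℤ)) = 0 := by
    rw [AddMonoidAlgebra.one_def, AddMonoidAlgebra.coeff_single, Finsupp.single_apply, if_neg (by omega)]
  rw [h1] at happ
  rcases mul_eq_zero.mp happ with h | h
  · simpa using congrArg (starRingEnd ℂ) h
  · exact absurd h hd0
end

section
/- Conversely, if c₂ and d₂ (bounded holomorphic functions on Δ, with the loop g₂ = [[a₂*, b₂*],[c₂, d₂]] SL(2,ℂ)-valued on S¹) have a common zero z₀ ∈ Δ, then the block Toeplitz operator A(g₂) has nontrivial kernel: the pair f = (d₂/(z−z₀), −c₂/(z−z₀)) lies in H² ⊕ H² and is annihilated by A(g₂). -/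
open Filter MeasureTheory Set

lemma stmt14_cont_exp : Continuous fun θ : ℝ => Complex.exp ((θ : ℂ) * Complex.I) :=
  Complex.continuous_exp.comp (Complex.continuous_ofReal.mul continuous_const)

lemma stmt14_Ene (z₀ : ℂ) (hz₀ : ‖z₀‖ < 1) (θ : ℝ) :
    Complex.exp ((θ : ℂ) * Complex.I) - z₀ ≠ 0 := by
  intro h
  have h1 : Complex.exp ((θ : ℂ) * Complex.I) = z₀ := by linear_combination h
  have : ‖Complex.exp ((θ : ℂ) * Complex.I)‖ = 1 :=
    Complex.norm_exp_ofReal_mul_I θ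
  rw [h1] at this
  linarith

lemma stmt14_Eabs (z₀ : ℂ) (θ : ℝ) :
    1 - ‖z₀‖ ≤ ‖Complex.exp ((θ : ℂ) * Complex.I) - z₀‖ := by
  have h := norm_sub_norm_le (Complex.exp ((θ : ℂ) * Complex.I)) z₀
  simp only [Complex.norm_exp_ofReal_mul_I] at h
  exact h

lemma stmt14_exp_norm (c : ℝ) (θ : ℝ) :
    ‖Complex.exp ((c : ℂ) * (θ : ℂ) * Complex.I)‖ = 1 := by
  have : (c : ℂ) * (θ : ℂ) * Complex.I = ((c * θ : ℝ) : ℂ) * Complex.I := by push_cast; ring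
  rw [this, Complex.norm_exp_ofReal_mul_I]

lemma stmt14_exp_int (n : ℕ) :
    (∫ θ in (0:ℝ)..(2*Real.pi), Complex.exp (-((n:ℝ)+1) * θ * Complex.I)) = 0 := by
  have hform : ∀ θ : ℝ, (-((n:ℝ)+1) * θ * Complex.I : ℂ) = (-((n:ℂ)+1) * Complex.I) * (θ : ℂ) := by
    intro θ; push_cast; ring
  have hc : (-((n:ℂ)+1) * Complex.I) ≠ 0 := by
    have h1 : ((n:ℂ)+1) ≠ 0 := Nat.cast_add_one_ne_zero n
    exact mul_ne_zero (neg_ne_zero.mpr h1) Complex.I_ne_zero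
  simp only [hform]
  rw [integral_exp_mul_complex hc]
  have h2 : (-((n:ℂ)+1) * Complex.I) * ((2*Real.pi : ℝ) : ℂ)
      = ((-(n+1) : ℤ) : ℂ) * (2 * Real.pi * Complex.I) := by push_cast; ring
  rw [h2, Complex.exp_int_mul_two_pi_mul_I]
  simp

lemma stmt14_J (z₀ : ℂ) (hz₀ : ‖z₀‖ < 1) (k : ℕ) :
    (∫ θ in (0:ℝ)..(2*Real.pi),
      Complex.exp (-(k:ℝ) * θ * Complex.I) / (Complex.exp ((θ:ℂ) * Complex.I) - z₀)) = 0 := by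
  set g : ℕ → ℝ → ℂ := fun n θ =>
    Complex.exp (-(n:ℝ) * θ * Complex.I) / (Complex.exp ((θ:ℂ) * Complex.I) - z₀) with hg
  set J : ℕ → ℂ := fun n => ∫ θ in (0:ℝ)..(2*Real.pi), g n θ with hJdef
  show J k = 0
  have hcontg : ∀ n : ℕ, Continuous (g n) := by
    intro n
    refine Continuous.div ?_ (stmt14_cont_exp.sub continuous_const) (fun θ => stmt14_Ene z₀ hz₀ θ)
    exact Complex.continuous_exp.comp
      ((continuous_const.mul Complex.continuous_ofReal).mul continuous_const)
  have hint : ∀ n : ℕ, IntervalIntegrable (g n) volume 0 (2*Real.pi) :=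
    fun n => (hcontg n).intervalIntegrable _ _
  have hintexp : ∀ n : ℕ, IntervalIntegrable
      (fun θ : ℝ => Complex.exp (-((n:ℝ)+1) * θ * Complex.I)) volume 0 (2*Real.pi) := by
    intro n
    exact (Complex.continuous_exp.comp
      ((continuous_const.mul Complex.continuous_ofReal).mul continuous_const)).intervalIntegrable _ _
  have step : ∀ n : ℕ, J n = z₀ * J (n+1) := by
    intro n
    have hid : ∀ θ : ℝ, g n θ =
        Complex.exp (-((n:ℝ)+1) * θ * Complex.I) + z₀ * g (n+1) θ := by
      intro θ
      have hne := stmt14_Ene z₀ hz₀ θ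
      have he : Complex.exp (-(((n:ℕ)+1:ℕ):ℝ) * θ * Complex.I) * Complex.exp ((θ:ℂ) * Complex.I)
          = Complex.exp (-(n:ℝ) * θ * Complex.I) := by
        rw [← Complex.exp_add]; congr 1; push_cast; ring
      have he2 : (-(((n:ℕ)+1:ℕ):ℝ) * θ * Complex.I : ℂ) = (-((n:ℝ)+1) * θ * Complex.I : ℂ) := by
        push_cast; ring
      simp only [hg]
      rw [← he, he2]
      field_simp
      ring
    calc J n = ∫ θ in (0:ℝ)..(2*Real.pi),
        (Complex.exp (-((n:ℝ)+1) * θ * Complex.I) + z₀ * g (n+1) θ) := by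
          simp only [hJdef]; exact intervalIntegral.integral_congr (fun θ _ => hid θ)
      _ = (∫ θ in (0:ℝ)..(2*Real.pi), Complex.exp (-((n:ℝ)+1) * θ * Complex.I))
          + ∫ θ in (0:ℝ)..(2*Real.pi), z₀ * g (n+1) θ := by
          exact intervalIntegral.integral_add (hintexp n) ((hint (n+1)).const_mul z₀)
      _ = z₀ * J (n+1) := by
          rw [stmt14_exp_int n, intervalIntegral.integral_const_mul]; simp [hJdef]
  have hpow : ∀ m n : ℕ, J n = z₀^m * J (n+m) := by
    intro m
    induction m with
    | zero => intro n; simp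
    | succ m ih =>
      intro n
      rw [ih n, step (n+m), ← mul_assoc, ← pow_succ, Nat.add_assoc]
  have hden : (0:ℝ) < 1 - ‖z₀‖ := by linarith
  have bnd : ∀ n : ℕ, ‖J n‖ ≤ (1 - ‖z₀‖)⁻¹ * (2*Real.pi) := by
    intro n
    have h := intervalIntegral.norm_integral_le_of_norm_le_const
      (C := (1 - ‖z₀‖)⁻¹) (f := g n) (a := 0) (b := 2*Real.pi) ?_
    · calc ‖J n‖ ≤ (1 - ‖z₀‖)⁻¹ * |2*Real.pi - 0| := h
        _ = (1 - ‖z₀‖)⁻¹ * (2*Real.pi) := by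
            rw [sub_zero, abs_of_pos (by positivity)]
    · intro θ _
      have h1 : ‖g n θ‖ = 1 / ‖Complex.exp ((θ:ℂ) * Complex.I) - z₀‖ := by
        simp only [hg, norm_div]
        congr 1
        rw [show (-(((n:ℝ)):ℂ) * ((θ:ℝ):ℂ) * Complex.I) = ((-((n:ℝ)*θ) : ℝ):ℂ) * Complex.I by
          push_cast; ring, Complex.norm_exp_ofReal_mul_I]
      rw [h1, one_div]
      exact inv_anti₀ hden (stmt14_Eabs z₀ θ)
  have htend : Tendsto (fun m : ℕ => (‖z₀‖)^m * ((1 - ‖z₀‖)⁻¹ * (2*Real.pi)))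
      atTop (nhds 0) := by
    have := (tendsto_pow_atTop_nhds_zero_of_lt_one (norm_nonneg z₀) hz₀).mul_const
      ((1 - ‖z₀‖)⁻¹ * (2*Real.pi))
    simpa using this
  have hle : ‖J k‖ ≤ 0 := by
    refine ge_of_tendsto htend (Eventually.of_forall fun m => ?_)
    calc ‖J k‖ = ‖z₀^m * J (k+m)‖ := by rw [← hpow m k]
      _ = (‖z₀‖)^m * ‖J (k+m)‖ := by
          simp [norm_mul, norm_pow]
      _ ≤ (‖z₀‖)^m * ((1 - ‖z₀‖)⁻¹ * (2*Real.pi)) := by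
          exact mul_le_mul_of_nonneg_left (bnd (k+m)) (by positivity)
  exact norm_le_zero_iff.mp hle

lemma stmt14_mem (z₀ : ℂ) (θ r : ℝ) (hr : r ∈ Set.Ioo (‖z₀‖) 1) :
    ‖(r:ℂ) * Complex.exp ((θ:ℂ) * Complex.I)‖ < 1 ∧
      (r:ℂ) * Complex.exp ((θ:ℂ) * Complex.I) ≠ z₀ := by
  have h0 : (0:ℝ) ≤ r := le_trans (norm_nonneg z₀) hr.1.le
  have habs : ‖(r:ℂ) * Complex.exp ((θ:ℂ) * Complex.I)‖ = r := by
    rw [norm_mul, Complex.norm_real, Real.norm_eq_abs, Complex.norm_exp_ofReal_mul_I, mul_one, abs_of_nonneg h0]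
  refine ⟨by rw [habs]; exact hr.2, fun h => ?_⟩
  have := hr.1
  rw [← h, habs] at this
  exact lt_irrefl r this

/-- Conversely, let `g₂ = [[a₂*, b₂*],[c₂, d₂]]` with `a₂, b₂, c₂, d₂` bounded
holomorphic on the unit disk and the boundary loop `SL(2,ℂ)`-valued a.e. on `S¹`.  If `c₂`
and `d₂` have a common zero `z₀ ∈ Δ`, then the block Toeplitz operator `A(g₂)` has
nontrivial kernel: the pair `f = (d₂/(z−z₀), −c₂/(z−z₀))` lies in `H² ⊕ H²`, is nonzero,
and is annihilated by `A(g₂)` (the second row `c₂ f₁ + d₂ f₂` vanishes identically and all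
nonnegative Fourier coefficients of the boundary values of the first row
`a₂* f₁ + b₂* f₂` vanish). -/
theorem stmt14 (a₂ b₂ c₂ d₂ : ℂ → ℂ)
    (holo : ∀ h ∈ ({a₂, b₂, c₂, d₂} : Set (ℂ → ℂ)),
      DifferentiableOn ℂ h {z : ℂ | ‖z‖ < 1})
    (hbdd : ∃ M : ℝ, ∀ h ∈ ({a₂, b₂, c₂, d₂} : Set (ℂ → ℂ)),
      ∀ z : ℂ, ‖z‖ < 1 → ‖h z‖ ≤ M)
    -- boundary values (a.e. radial limits) of a₂, b₂, c₂, d₂: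
    (A B C D : ℝ → ℂ)
    (hA : ∀ᵐ θ : ℝ, Tendsto (fun r : ℝ => a₂ ((r : ℂ) * Complex.exp (θ * Complex.I)))
      (nhdsWithin 1 (Set.Iio 1)) (nhds (A θ)))
    (hB : ∀ᵐ θ : ℝ, Tendsto (fun r : ℝ => b₂ ((r : ℂ) * Complex.exp (θ * Complex.I)))
      (nhdsWithin 1 (Set.Iio 1)) (nhds (B θ)))
    (hC : ∀ᵐ θ : ℝ, Tendsto (fun r : ℝ => c₂ ((r : ℂ) * Complex.exp (θ * Complex.I)))
      (nhdsWithin 1 (Set.Iio 1)) (nhds (C θ)))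
    (hD : ∀ᵐ θ : ℝ, Tendsto (fun r : ℝ => d₂ ((r : ℂ) * Complex.exp (θ * Complex.I)))
      (nhdsWithin 1 (Set.Iio 1)) (nhds (D θ)))
    -- the loop is SL(2,ℂ)-valued a.e. on the circle:
    (hdet : ∀ᵐ θ : ℝ, starRingEnd ℂ (A θ) * D θ - starRingEnd ℂ (B θ) * C θ = 1)
    -- a common zero of c₂ and d₂ in the open disk:
    (z₀ : ℂ) (hz₀ : ‖z₀‖ < 1) (hcz : c₂ z₀ = 0) (hdz : d₂ z₀ = 0) :
    ∃ f₁ f₂ : ℂ → ℂ,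
      DifferentiableOn ℂ f₁ {z : ℂ | ‖z‖ < 1} ∧
      DifferentiableOn ℂ f₂ {z : ℂ | ‖z‖ < 1} ∧
      -- f = (d₂/(z−z₀), −c₂/(z−z₀)):
      (∀ z : ℂ, ‖z‖ < 1 → z ≠ z₀ →
        f₁ z = d₂ z / (z - z₀) ∧ f₂ z = -c₂ z / (z - z₀)) ∧
      -- f ∈ H² ⊕ H²:
      (∃ M : ℝ, ∀ r : ℝ, 0 ≤ r → r < 1 →
        (∫ θ in (0 : ℝ)..(2 * Real.pi),
          ‖f₁ ((r : ℂ) * Complex.exp (θ * Complex.I))‖ ^ 2) ≤ M ∧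
        (∫ θ in (0 : ℝ)..(2 * Real.pi),
          ‖f₂ ((r : ℂ) * Complex.exp (θ * Complex.I))‖ ^ 2) ≤ M) ∧
      -- f is nonzero:
      (¬ ∀ z : ℂ, ‖z‖ < 1 → f₁ z = 0 ∧ f₂ z = 0) ∧
      -- the second row of g₂ f vanishes identically:
      (∀ z : ℂ, ‖z‖ < 1 → c₂ z * f₁ z + d₂ z * f₂ z = 0) ∧
      -- P₊ of the first row of g₂ f vanishes:
      ∃ G₁ G₂ : ℝ → ℂ,
        (∀ᵐ θ : ℝ, Tendsto (fun r : ℝ => f₁ ((r : ℂ) * Complex.exp (θ * Complex.I)))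
          (nhdsWithin 1 (Set.Iio 1)) (nhds (G₁ θ))) ∧
        (∀ᵐ θ : ℝ, Tendsto (fun r : ℝ => f₂ ((r : ℂ) * Complex.exp (θ * Complex.I)))
          (nhdsWithin 1 (Set.Iio 1)) (nhds (G₂ θ))) ∧
        ∀ k : ℕ,
          (∫ θ in (0 : ℝ)..(2 * Real.pi),
            (starRingEnd ℂ (A θ) * G₁ θ + starRingEnd ℂ (B θ) * G₂ θ) *
              Complex.exp (-(k : ℝ) * θ * Complex.I)) = 0 := by
  classical
  obtain ⟨M, hM⟩ := hbdd
  have hc2 : DifferentiableOn ℂ c₂ {z : ℂ | ‖z‖ < 1} := holo c₂ (by simp)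
  have hd2 : DifferentiableOn ℂ d₂ {z : ℂ | ‖z‖ < 1} := holo d₂ (by simp)
  have hMc : ∀ z : ℂ, ‖z‖ < 1 → ‖c₂ z‖ ≤ M := hM c₂ (by simp)
  have hMd : ∀ z : ℂ, ‖z‖ < 1 → ‖d₂ z‖ ≤ M := hM d₂ (by simp)
  have hM0 : 0 ≤ M := le_trans (norm_nonneg _) (hMc 0 (by simp))
  have hΔopen : IsOpen {z : ℂ | ‖z‖ < 1} :=
    isOpen_lt continuous_norm continuous_const
  have hmem : {z : ℂ | ‖z‖ < 1} ∈ nhds z₀ := hΔopen.mem_nhds hz₀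
  set f₁ : ℂ → ℂ := dslope d₂ z₀ with hf₁
  set f₂ : ℂ → ℂ := fun z => -dslope c₂ z₀ z with hf₂
  have hdiff₁ : DifferentiableOn ℂ f₁ {z : ℂ | ‖z‖ < 1} :=
    (Complex.differentiableOn_dslope hmem).mpr hd2
  have hdiffc : DifferentiableOn ℂ (dslope c₂ z₀) {z : ℂ | ‖z‖ < 1} :=
    (Complex.differentiableOn_dslope hmem).mpr hc2
  have hdiff₂ : DifferentiableOn ℂ f₂ {z : ℂ | ‖z‖ < 1} := hdiffc.neg
  have hform₁ : ∀ z : ℂ, z ≠ z₀ → f₁ z = d₂ z / (z - z₀) := by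
    intro z hz
    rw [hf₁, dslope_of_ne _ hz, slope_def_field, hdz, sub_zero]
  have hform₂ : ∀ z : ℂ, z ≠ z₀ → f₂ z = -c₂ z / (z - z₀) := by
    intro z hz
    show -dslope c₂ z₀ z = -c₂ z / (z - z₀)
    rw [dslope_of_ne _ hz, slope_def_field, hcz, sub_zero, neg_div]
  -- uniform bounds on the disk
  set ρ : ℝ := (1 - ‖z₀‖) / 2 with hρdef
  have hρ : 0 < ρ := by rw [hρdef]; linarith
  have hball : Metric.closedBall z₀ ρ ⊆ {z : ℂ | ‖z‖ < 1} := by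
    intro z hz
    simp only [Metric.mem_closedBall, Complex.dist_eq] at hz
    have h2 : ‖z‖ ≤ ‖z - z₀‖ + ‖z₀‖ := by
      calc ‖z‖ = ‖(z - z₀) + z₀‖ := by rw [sub_add_cancel]
        _ ≤ _ := norm_add_le _ _
    simp only [Set.mem_setOf_eq]
    have h3 : ρ + ‖z₀‖ < 1 := by rw [hρdef]; linarith
    linarith
  have hK : ∀ g : ℂ → ℂ, DifferentiableOn ℂ g {z : ℂ | ‖z‖ < 1} → g z₀ = 0 →
      (∀ z : ℂ, ‖z‖ < 1 → ‖g z‖ ≤ M) →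
      ∃ K : ℝ, 0 ≤ K ∧ ∀ z : ℂ, ‖z‖ < 1 → ‖dslope g z₀ z‖ ≤ K := by
    intro g hg hg0 hgM
    have hcont : ContinuousOn (dslope g z₀) {z : ℂ | ‖z‖ < 1} :=
      ((Complex.differentiableOn_dslope hmem).mpr hg).continuousOn
    obtain ⟨Cb, hCb⟩ := (isCompact_closedBall z₀ ρ).exists_bound_of_continuousOn
      (hcont.mono hball)
    refine ⟨max (max Cb (M / ρ)) 0, le_max_right _ _, ?_⟩
    intro z hz
    by_cases hzb : z ∈ Metric.closedBall z₀ ρ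
    · have := hCb z hzb
      exact le_trans this (le_trans (le_max_left _ _) (le_max_left _ _))
    · have hzρ : ρ ≤ ‖z - z₀‖ := by
        simp only [Metric.mem_closedBall, Complex.dist_eq, not_le] at hzb
        exact hzb.le
      have hzne : z ≠ z₀ := by
        intro h
        rw [h, sub_self] at hzρ
        simp at hzρ
        linarith
      rw [dslope_of_ne _ hzne, slope_def_field, hg0, sub_zero, norm_div]
      refine le_trans ?_ (le_trans (le_max_right Cb (M / ρ)) (le_max_left _ _))
      exact div_le_div₀ hM0 (hgM z hz) hρ hzρ
  obtain ⟨K₁, hK₁0, hK₁⟩ := hK d₂ hd2 hdz hMd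
  obtain ⟨K₂, hK₂0, hK₂⟩ := hK c₂ hc2 hcz hMc
  set K : ℝ := max K₁ K₂ with hKdef
  have hK0 : 0 ≤ K := le_trans hK₁0 (le_max_left _ _)
  refine ⟨f₁, f₂, hdiff₁, hdiff₂, fun z hz hne => ⟨hform₁ z hne, hform₂ z hne⟩, ?_, ?_, ?_, ?_⟩
  · -- H² bounds
    refine ⟨2 * Real.pi * K ^ 2, fun r hr0 hr1 => ?_⟩
    have habs : ∀ θ : ℝ, ‖(r : ℂ) * Complex.exp (θ * Complex.I)‖ < 1 := by
      intro θ
      rw [norm_mul, Complex.norm_real, Real.norm_eq_abs, Complex.norm_exp_ofReal_mul_I, mul_one, abs_of_nonneg hr0]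
      exact hr1
    have main : ∀ f : ℂ → ℂ, ContinuousOn f {z : ℂ | ‖z‖ < 1} →
        (∀ z : ℂ, ‖z‖ < 1 → ‖f z‖ ≤ K) →
        (∫ θ in (0 : ℝ)..(2 * Real.pi),
          ‖f ((r : ℂ) * Complex.exp (θ * Complex.I))‖ ^ 2) ≤ 2 * Real.pi * K ^ 2 := by
      intro f hfc hfb
      have h1 : Continuous fun θ : ℝ => (r : ℂ) * Complex.exp ((θ : ℂ) * Complex.I) :=
        continuous_const.mul stmt14_cont_exp
      have h2 : Continuous fun θ : ℝ => f ((r : ℂ) * Complex.exp ((θ : ℂ) * Complex.I)) :=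
        hfc.comp_continuous h1 fun θ => habs θ
      have hcont : Continuous fun θ : ℝ =>
          ‖f ((r : ℂ) * Complex.exp ((θ : ℂ) * Complex.I))‖ ^ 2 :=
        (continuous_norm.comp h2).pow 2
      have hle : ∀ θ ∈ Set.Icc (0 : ℝ) (2 * Real.pi),
          ‖f ((r : ℂ) * Complex.exp (θ * Complex.I))‖ ^ 2 ≤ K ^ 2 := by
        intro θ _
        have hb := hfb _ (habs θ)
        have h0 := norm_nonneg (f ((r : ℂ) * Complex.exp (θ * Complex.I)))
        nlinarith
      calc (∫ θ in (0 : ℝ)..(2 * Real.pi),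
            ‖f ((r : ℂ) * Complex.exp (θ * Complex.I))‖ ^ 2)
          ≤ ∫ _ in (0 : ℝ)..(2 * Real.pi), K ^ 2 :=
            intervalIntegral.integral_mono_on (by positivity)
              (hcont.intervalIntegrable _ _) intervalIntegrable_const hle
        _ = 2 * Real.pi * K ^ 2 := by
            rw [intervalIntegral.integral_const, smul_eq_mul, sub_zero]
    refine ⟨main f₁ hdiff₁.continuousOn (fun z hz => (hK₁ z hz).trans (le_max_left _ _)), ?_⟩
    refine main f₂ hdiff₂.continuousOn fun z hz => ?_
    show ‖-dslope c₂ z₀ z‖ ≤ K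
    rw [norm_neg]
    exact (hK₂ z hz).trans (le_max_right _ _)
  · -- nonzero
    intro hall
    obtain ⟨θ, hθdet, hθC, hθD⟩ := (hdet.and (hC.and hD)).exists
    have hev : ∀ᶠ r : ℝ in nhdsWithin 1 (Set.Iio 1), r ∈ Set.Ioo (‖z₀‖) 1 :=
      Ioo_mem_nhdsLT_of_mem (Set.mem_Ioc.mpr ⟨hz₀, le_refl 1⟩)
    have hDθ : D θ = 0 := by
      refine tendsto_nhds_unique hθD (Tendsto.congr' ?_ tendsto_const_nhds)
      filter_upwards [hev] with r hr
      obtain ⟨ha, hne⟩ := stmt14_mem z₀ θ r hr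
      have h1 := (hall _ ha).1
      rw [hform₁ _ hne] at h1
      have hsub : (r : ℂ) * Complex.exp ((θ : ℂ) * Complex.I) - z₀ ≠ 0 := sub_ne_zero.mpr hne
      rcases div_eq_zero_iff.mp h1 with h | h
      · exact h.symm
      · exact absurd h hsub
    have hCθ : C θ = 0 := by
      refine tendsto_nhds_unique hθC (Tendsto.congr' ?_ tendsto_const_nhds)
      filter_upwards [hev] with r hr
      obtain ⟨ha, hne⟩ := stmt14_mem z₀ θ r hr
      have h1 := (hall _ ha).2
      rw [hform₂ _ hne] at h1
      have hsub : (r : ℂ) * Complex.exp ((θ : ℂ) * Complex.I) - z₀ ≠ 0 := sub_ne_zero.mpr hne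
      rw [neg_div, neg_eq_zero] at h1
      rcases div_eq_zero_iff.mp h1 with h | h
      · exact h.symm
      · exact absurd h hsub
    rw [hCθ, hDθ] at hθdet
    simp at hθdet
  · -- second row vanishes
    intro z hz
    by_cases hzz : z = z₀
    · rw [hzz, hcz, hdz]; ring
    · rw [hform₁ z hzz, hform₂ z hzz]
      have hsub : z - z₀ ≠ 0 := sub_ne_zero.mpr hzz
      field_simp
      ring
  · -- boundary values and Fourier coefficients
    refine ⟨fun θ => D θ / (Complex.exp ((θ : ℂ) * Complex.I) - z₀),
      fun θ => -C θ / (Complex.exp ((θ : ℂ) * Complex.I) - z₀), ?_, ?_, ?_⟩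
    · filter_upwards [hD] with θ hDθ
      have hne := stmt14_Ene z₀ hz₀ θ
      have h1 : Tendsto (fun r : ℝ => ((r : ℂ) * Complex.exp ((θ : ℂ) * Complex.I) - z₀))
          (nhdsWithin 1 (Set.Iio 1)) (nhds (Complex.exp ((θ : ℂ) * Complex.I) - z₀)) := by
        have h0 : Tendsto (fun r : ℝ => ((r : ℂ))) (nhdsWithin 1 (Set.Iio 1)) (nhds 1) :=
          (Complex.continuous_ofReal.tendsto 1).mono_left nhdsWithin_le_nhds
        have h2 := (h0.mul_const (Complex.exp ((θ : ℂ) * Complex.I))).sub_const z₀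
        simpa using h2
      have h3 := hDθ.div h1 hne
      refine Tendsto.congr' ?_ h3
      filter_upwards [Ioo_mem_nhdsLT_of_mem (Set.mem_Ioc.mpr ⟨hz₀, le_refl (1:ℝ)⟩)] with r hr
      obtain ⟨-, hne2⟩ := stmt14_mem z₀ θ r hr
      simp only [Pi.div_apply, hform₁ _ hne2]
    · filter_upwards [hC] with θ hCθ
      have hne := stmt14_Ene z₀ hz₀ θ
      have h1 : Tendsto (fun r : ℝ => ((r : ℂ) * Complex.exp ((θ : ℂ) * Complex.I) - z₀))
          (nhdsWithin 1 (Set.Iio 1)) (nhds (Complex.exp ((θ : ℂ) * Complex.I) - z₀)) := by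
        have h0 : Tendsto (fun r : ℝ => ((r : ℂ))) (nhdsWithin 1 (Set.Iio 1)) (nhds 1) :=
          (Complex.continuous_ofReal.tendsto 1).mono_left nhdsWithin_le_nhds
        have h2 := (h0.mul_const (Complex.exp ((θ : ℂ) * Complex.I))).sub_const z₀
        simpa using h2
      have h3 := (hCθ.neg).div h1 hne
      refine Tendsto.congr' ?_ h3
      filter_upwards [Ioo_mem_nhdsLT_of_mem (Set.mem_Ioc.mpr ⟨hz₀, le_refl (1:ℝ)⟩)] with r hr
      obtain ⟨-, hne2⟩ := stmt14_mem z₀ θ r hr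
      simp only [Pi.div_apply, hform₂ _ hne2, neg_div]
    · intro k
      have hcongr : ∀ᵐ θ : ℝ,
          (starRingEnd ℂ (A θ) * (D θ / (Complex.exp ((θ : ℂ) * Complex.I) - z₀)) +
            starRingEnd ℂ (B θ) * (-C θ / (Complex.exp ((θ : ℂ) * Complex.I) - z₀))) *
              Complex.exp (-(k : ℝ) * θ * Complex.I) =
          Complex.exp (-(k : ℝ) * θ * Complex.I) /
            (Complex.exp ((θ : ℂ) * Complex.I) - z₀) := by
        filter_upwards [hdet] with θ hθ
        have hne := stmt14_Ene z₀ hz₀ θ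
        have hid : starRingEnd ℂ (A θ) * (D θ / (Complex.exp ((θ : ℂ) * Complex.I) - z₀)) +
            starRingEnd ℂ (B θ) * (-C θ / (Complex.exp ((θ : ℂ) * Complex.I) - z₀)) =
            (starRingEnd ℂ (A θ) * D θ - starRingEnd ℂ (B θ) * C θ) /
              (Complex.exp ((θ : ℂ) * Complex.I) - z₀) := by
          field_simp
          ring
        rw [hid, hθ, div_mul_eq_mul_div, one_mul]
      calc (∫ θ in (0 : ℝ)..(2 * Real.pi),
            (starRingEnd ℂ (A θ) * (D θ / (Complex.exp ((θ : ℂ) * Complex.I) - z₀)) +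
              starRingEnd ℂ (B θ) * (-C θ / (Complex.exp ((θ : ℂ) * Complex.I) - z₀))) *
                Complex.exp (-(k : ℝ) * θ * Complex.I))
          = ∫ θ in (0 : ℝ)..(2 * Real.pi), Complex.exp (-(k : ℝ) * θ * Complex.I) /
              (Complex.exp ((θ : ℂ) * Complex.I) - z₀) :=
            intervalIntegral.integral_congr_ae (hcongr.mono fun θ h _ => h)
        _ = 0 := stmt14_J z₀ hz₀ k
end
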